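/- Let A ∈ ℝ^{n×n}, B ∈ ℝ^{n×m}, C₁ ∈ ℝ^{p×n}, D₁ ∈ ℝ^{p×m}, C₂ ∈ ℝ^{q×n}, D₂ ∈ ℝ^{q×m}, and suppose there exists a symmetric matrix P ∈ ℝ^{n×n} such that the block matrix [[AᵀPA − P, AᵀPB],[BᵀPA, BᵀPB]] + [[C₂ᵀC₂ − C₁ᵀC₁, C₂ᵀD₂ − C₁ᵀD₁],[D₂ᵀC₂ − D₁ᵀC₁, D₂ᵀD₂ − D₁ᵀD₁]] is negative semidefinite. Then for every N ∈ ℕ and every trajectory x[k+1] = A x[k] + B a[k], y₁[k] = C₁ x[k] + D₁ a[k], y₂[k] = C₂ x[k] + D₂ a[k] with x[0] = 0 and x[N+1] = 0, it holds that Σ_{k=0}^{N} ‖y₂[k]‖² ≤ Σ_{k=0}^{N} ‖y₁[k]‖². -/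

import Mathlib

open Matrix

private lemma stmt13.quadAux {r s t : ℕ} (M : Matrix (Fin r) (Fin s) ℝ) (N : Matrix (Fin r) (Fin t) ℝ)
    (u : Fin s → ℝ) (z : Fin t → ℝ) :
    u ⬝ᵥ (Mᵀ * N).mulVec z = M.mulVec u ⬝ᵥ N.mulVec z := by
  rw [← Matrix.mulVec_mulVec, Matrix.dotProduct_mulVec, Matrix.vecMul_transpose]

private lemma stmt13.quad3 {r s t : ℕ} (M : Matrix (Fin r) (Fin s) ℝ) (N : Matrix (Fin r) (Fin r) ℝ)
    (Q : Matrix (Fin r) (Fin t) ℝ) (u : Fin s → ℝ) (z : Fin t → ℝ) :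
    u ⬝ᵥ (Mᵀ * N * Q).mulVec z = M.mulVec u ⬝ᵥ N.mulVec (Q.mulVec z) := by
  rw [Matrix.mul_assoc, stmt13.quadAux, Matrix.mulVec_mulVec]

theorem stmt13 {n m p q : ℕ}
    (A : Matrix (Fin n) (Fin n) ℝ) (B : Matrix (Fin n) (Fin m) ℝ)
    (C₁ : Matrix (Fin p) (Fin n) ℝ) (D₁ : Matrix (Fin p) (Fin m) ℝ)
    (C₂ : Matrix (Fin q) (Fin n) ℝ) (D₂ : Matrix (Fin q) (Fin m) ℝ)
    (P : Matrix (Fin n) (Fin n) ℝ) (hP : P.IsSymm)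
    (hLMI : (-(Matrix.fromBlocks
        (A.transpose * P * A - P + (C₂.transpose * C₂ - C₁.transpose * C₁))
        (A.transpose * P * B + (C₂.transpose * D₂ - C₁.transpose * D₁))
        (B.transpose * P * A + (D₂.transpose * C₂ - D₁.transpose * C₁))
        (B.transpose * P * B + (D₂.transpose * D₂ - D₁.transpose * D₁)))).PosSemidef) :
    ∀ (N : ℕ) (x : ℕ → Fin n → ℝ) (a : ℕ → Fin m → ℝ)
      (y₁ : ℕ → Fin p → ℝ) (y₂ : ℕ → Fin q → ℝ),
      (∀ k, x (k + 1) = A.mulVec (x k) + B.mulVec (a k)) →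
      (∀ k, y₁ k = C₁.mulVec (x k) + D₁.mulVec (a k)) →
      (∀ k, y₂ k = C₂.mulVec (x k) + D₂.mulVec (a k)) →
      x 0 = 0 → x (N + 1) = 0 →
      ∑ k ∈ Finset.range (N + 1), ∑ j, (y₂ k j) ^ 2 ≤
        ∑ k ∈ Finset.range (N + 1), ∑ j, (y₁ k j) ^ 2 := by
  intro N x a y₁ y₂ hx hy₁ hy₂ hx0 hxN
  set M := (Matrix.fromBlocks
        (A.transpose * P * A - P + (C₂.transpose * C₂ - C₁.transpose * C₁))
        (A.transpose * P * B + (C₂.transpose * D₂ - C₁.transpose * D₁))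
        (B.transpose * P * A + (D₂.transpose * C₂ - D₁.transpose * C₁))
        (B.transpose * P * B + (D₂.transpose * D₂ - D₁.transpose * D₁))) with hM
  have hquad : ∀ v : Fin n ⊕ Fin m → ℝ, v ⬝ᵥ M.mulVec v ≤ 0 := by
    intro v
    have := hLMI.dotProduct_mulVec_nonneg v
    simp only [Matrix.neg_mulVec, dotProduct_neg, RCLike.star_def, star_trivial] at this
    linarith
  set V : ℕ → ℝ := fun k => x k ⬝ᵥ P.mulVec (x k) with hV
  have key : ∀ k, (V (k + 1) - V k) + (y₂ k ⬝ᵥ y₂ k - y₁ k ⬝ᵥ y₁ k) ≤ 0 := by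
    intro k
    have h := hquad (Sum.elim (x k) (a k))
    have heq : (Sum.elim (x k) (a k)) ⬝ᵥ M.mulVec (Sum.elim (x k) (a k)) =
        (V (k + 1) - V k) + (y₂ k ⬝ᵥ y₂ k - y₁ k ⬝ᵥ y₁ k) := by
      rw [hM, Matrix.fromBlocks_mulVec, sumElim_dotProduct_sumElim, hV]
      simp only [hx k, hy₁ k, hy₂ k]
      simp only [Matrix.add_mulVec, Matrix.sub_mulVec, dotProduct_add, dotProduct_sub,
        add_dotProduct, Matrix.mulVec_add, Sum.elim_comp_inl, Sum.elim_comp_inr,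
        stmt13.quad3, stmt13.quadAux]
      ring
    rw [heq] at h
    exact h
  have hsum := Finset.sum_le_sum (fun k (_ : k ∈ Finset.range (N + 1)) => key k)
  rw [Finset.sum_add_distrib, Finset.sum_range_sub V] at hsum
  have hV0 : V 0 = 0 := by simp [hV, hx0]
  have hVN : V (N + 1) = 0 := by simp [hV, hxN]
  have hdot : ∀ k, (∑ j, (y₂ k j) ^ 2) - (∑ j, (y₁ k j) ^ 2) = y₂ k ⬝ᵥ y₂ k - y₁ k ⬝ᵥ y₁ k := by
    intro k
    simp [dotProduct, sq]
  have : ∑ k ∈ Finset.range (N + 1), (y₂ k ⬝ᵥ y₂ k - y₁ k ⬝ᵥ y₁ k) ≤ 0 := by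
    simp only [hV0, hVN, Finset.sum_const, smul_zero] at hsum
    linarith [hsum]
  calc ∑ k ∈ Finset.range (N + 1), ∑ j, (y₂ k j) ^ 2
      = ∑ k ∈ Finset.range (N + 1), ∑ j, (y₁ k j) ^ 2
        + ∑ k ∈ Finset.range (N + 1), (y₂ k ⬝ᵥ y₂ k - y₁ k ⬝ᵥ y₁ k) := by
        rw [← Finset.sum_add_distrib]
        exact Finset.sum_congr rfl fun k _ => by rw [← hdot k]; ring
    _ ≤ ∑ k ∈ Finset.range (N + 1), ∑ j, (y₁ k j) ^ 2 := by linarith
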